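/- Let 𝓕 be a forbidden family, let G_1,...,G_d be graphs each with Λ(G_i,𝓕) ≤ k, and let S = {s_1,...,s_d} be a k-multiplicative Sidon set. Then the cartesian product G_1 □ G_2 □ ... □ G_d has 𝓕-free chromatic span at most k·max(S). Specifically, if c_i is an 𝓕-free colouring of G_i with span at most k, then c(v) := Σ_i s_i·c_i(v_i) is an 𝓕-free colouring of the product with span at most k·max(S). -/

import Mathlib

/-- The cartesian (box) product of a finite family of graphs. -/
def BoxProd {d : ℕ} {V : Fin d → Type*} (G : ∀ i, SimpleGraph (V i)) :
    SimpleGraph (∀ i, V i) where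
  Adj v w := ∃ i, (G i).Adj (v i) (w i) ∧ ∀ j, j ≠ i → v j = w j
  symm := ⟨fun v w ⟨i, h, hj⟩ => ⟨i, h.symm, fun j hji => (hj j hji).symm⟩⟩
  loopless := ⟨fun v ⟨i, h, _⟩ => (G i).loopless.irrefl _ h⟩

/-- A proper colouring with integer colours. -/
def ProperZ {V : Type*} (G : SimpleGraph V) (c : V → ℤ) : Prop :=
  ∀ v w, G.Adj v w → c v ≠ c w

/-- `c` is an `F`-free colouring of `G`. -/
def IsFFree {V : Type*} (G : SimpleGraph V) {ι : Type*} {W : ι → Type*}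
    (F : ∀ i, SimpleGraph (W i)) (c : V → ℤ) : Prop :=
  ProperZ G c ∧
    ∀ (i : ι) (f : W i → V), Function.Injective f →
      (∀ v w, (F i).Adj v w → G.Adj (f v) (f w)) →
      3 ≤ (Set.range fun w => c (f w)).ncard

/-- The colouring `c` has span at most `k`. -/
def SpanLE {V : Type*} (G : SimpleGraph V) (c : V → ℤ) (k : ℕ) : Prop :=
  ∀ v w, G.Adj v w → |c v - c w| ≤ (k : ℤ)

/-- The `F`-free chromatic span. -/
noncomputable def LambdaF {V : Type*} (G : SimpleGraph V) {ι : Type*} {W : ι → Type*}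
    (F : ∀ i, SimpleGraph (W i)) : ℕ :=
  sInf {k | ∃ c : V → ℤ, IsFFree G F c ∧ SpanLE G c k}

theorem stmt11 {d k : ℕ} {V : Fin d → Type*} (G : ∀ i, SimpleGraph (V i))
    {ι : Type*} {W : ι → Type*} [∀ i, Fintype (W i)] (F : ∀ i, SimpleGraph (W i))
    (hconn : ∀ i, (F i).Connected)
    (hbip : ∀ i, ∃ b : W i → Bool, ∀ v w, (F i).Adj v w → b v ≠ b w)
    (hthree : ∀ i, 3 ≤ Fintype.card (W i))
    (c : ∀ i, V i → ℤ) (hc : ∀ i, IsFFree (G i) F (c i))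
    (hspan : ∀ i, SpanLE (G i) (c i) k)
    (s : Fin d → ℕ) (hs1 : ∀ i, 1 ≤ s i) (hsinj : Function.Injective s)
    (hSidon : ∀ (i j : Fin d) (a b : ℕ), 1 ≤ a → a ≤ k → 1 ≤ b → b ≤ k →
      a * s i = b * s j → a = b ∧ s i = s j) :
    IsFFree (BoxProd G) F (fun v => ∑ i, (s i : ℤ) * c i (v i)) ∧
    SpanLE (BoxProd G) (fun v => ∑ i, (s i : ℤ) * c i (v i)) (k * Finset.univ.sup s) ∧
    LambdaF (BoxProd G) F ≤ k * Finset.univ.sup s := by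
  set cc : (∀ i, V i) → ℤ := fun v => ∑ i, (s i : ℤ) * c i (v i) with hcc
  have hdiff : ∀ (i : Fin d) (v w : ∀ i, V i), (∀ l, l ≠ i → v l = w l) →
      cc v - cc w = (s i : ℤ) * (c i (v i) - c i (w i)) := by
    intro i v w hvw
    simp only [hcc]
    rw [← Finset.sum_sub_distrib, Finset.sum_eq_single i]
    · ring
    · intro l _ hl; rw [hvw l hl]; ring
    · intro h; exact absurd (Finset.mem_univ i) h
  have hspos : ∀ i : Fin d, (s i : ℤ) ≠ 0 := by
    intro i; have := hs1 i; positivity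
  have proper : ProperZ (BoxProd G) cc := by
    rintro v w ⟨i, hadj, hoth⟩ heq
    have h := hdiff i v w hoth
    rw [heq, sub_self] at h
    rcases mul_eq_zero.mp h.symm with h' | h'
    · exact hspos i h'
    · exact (hc i).1 _ _ hadj (sub_eq_zero.mp h')
  have span : SpanLE (BoxProd G) cc (k * Finset.univ.sup s) := by
    rintro v w ⟨i, hadj, hoth⟩
    rw [hdiff i v w hoth, abs_mul, abs_of_nonneg (show (0:ℤ) ≤ (s i : ℤ) by positivity)]
    have h2 : |c i (v i) - c i (w i)| ≤ (k : ℤ) := hspan i _ _ hadj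
    have h3' : s i ≤ Finset.univ.sup s := Finset.le_sup (Finset.mem_univ i)
    have h3 : (s i : ℤ) ≤ ((Finset.univ.sup s : ℕ) : ℤ) := by exact_mod_cast h3'
    calc (s i : ℤ) * |c i (v i) - c i (w i)|
        ≤ ((Finset.univ.sup s : ℕ) : ℤ) * (k : ℤ) :=
          mul_le_mul h3 h2 (abs_nonneg _) (by positivity)
      _ = ((k * Finset.univ.sup s : ℕ) : ℤ) := by push_cast; ring
  have ffree : ∀ (j : ι) (f : W j → ∀ i, V i), Function.Injective f →
      (∀ v w, (F j).Adj v w → (BoxProd G).Adj (f v) (f w)) →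
      3 ≤ (Set.range fun w => cc (f w)).ncard := by
    intro j f hinj hhom
    by_contra h3
    push_neg at h3
    have hT2 : (Set.range fun w => cc (f w)).ncard ≤ 2 := by omega
    obtain ⟨v0, x0, hv0x0⟩ : ∃ v0 x0, (F j).Adj v0 x0 := by
      obtain ⟨a, b, hab⟩ := Fintype.exists_pair_of_one_lt_card
        (by have := hthree j; omega : 1 < Fintype.card (W j))
      obtain ⟨p⟩ := (hconn j).preconnected a b
      cases p with
      | nil => exact absurd rfl hab
      | cons h _ => exact ⟨_, _, h⟩
    set α := cc (f v0) with hα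
    set β := cc (f x0) with hβ
    have hαβ : α ≠ β := proper _ _ (hhom _ _ hv0x0)
    have hTfin : (Set.range fun w => cc (f w)).Finite := Set.finite_range _
    have hTset : Set.range (fun w => cc (f w)) = {α, β} := by
      refine (Set.eq_of_subset_of_ncard_le ?_ ?_ hTfin).symm
      · intro x hx
        rcases hx with hx | hx
        · exact hx ▸ ⟨v0, rfl⟩
        · exact hx ▸ ⟨x0, rfl⟩
      · rw [Set.ncard_pair hαβ]; exact hT2
    have habs : ∀ v w, (F j).Adj v w → |cc (f v) - cc (f w)| = |α - β| := by
      intro v w h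
      have hv : cc (f v) ∈ ({α, β} : Set ℤ) := hTset ▸ ⟨v, rfl⟩
      have hw : cc (f w) ∈ ({α, β} : Set ℤ) := hTset ▸ ⟨w, rfl⟩
      have hne : cc (f v) ≠ cc (f w) := proper _ _ (hhom _ _ h)
      simp only [Set.mem_insert_iff, Set.mem_singleton_iff] at hv hw
      rcases hv with hv | hv <;> rcases hw with hw | hw <;>
        rw [hv, hw] <;> first
          | rfl
          | (exact absurd (hv.trans hw.symm) hne)
          | (exact abs_sub_comm _ _)
    have hedge : ∀ v w, (F j).Adj v w → ∃ i : Fin d,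
        (G i).Adj (f v i) (f w i) ∧ (∀ l, l ≠ i → f v l = f w l) ∧
        (c i (f v i) - c i (f w i)).natAbs * s i = (α - β).natAbs ∧
        1 ≤ (c i (f v i) - c i (f w i)).natAbs ∧
        (c i (f v i) - c i (f w i)).natAbs ≤ k := by
      intro v w h
      obtain ⟨i, hadj, hoth⟩ := hhom v w h
      have h1 : |cc (f v) - cc (f w)| = |α - β| := habs v w h
      rw [hdiff i _ _ hoth, abs_mul,
        abs_of_nonneg (show (0:ℤ) ≤ (s i : ℤ) by positivity)] at h1
      refine ⟨i, hadj, hoth, ?_, ?_, ?_⟩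
      · have h2 : (((c i (f v i) - c i (f w i)).natAbs * s i : ℕ) : ℤ)
            = (((α - β).natAbs : ℕ) : ℤ) := by
          push_cast [Int.natCast_natAbs]
          linarith [h1]
        exact_mod_cast h2
      · exact Int.natAbs_pos.mpr (sub_ne_zero.mpr ((hc i).1 _ _ hadj))
      · have h2 := hspan i _ _ hadj
        rw [Int.abs_eq_natAbs] at h2
        exact_mod_cast h2
    obtain ⟨i0, hadj0, hoth0, heq0, h1a0, hk0⟩ := hedge v0 x0 hv0x0
    have hcoord : ∀ v w, (F j).Adj v w →
        (G i0).Adj (f v i0) (f w i0) ∧ ∀ l, l ≠ i0 → f v l = f w l := by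
      intro v w h
      obtain ⟨i, hadj, hoth, heq, h1a, hk⟩ := hedge v w h
      have hii : i = i0 := by
        have hsid := hSidon i i0 _ _ h1a hk h1a0 hk0 (heq.trans heq0.symm)
        exact hsinj hsid.2
      subst hii; exact ⟨hadj, hoth⟩
    have claim0 : ∀ (u w : W j) (p : (F j).Walk u w) (l : Fin d),
        l ≠ i0 → f u l = f w l := by
      intro u w p
      induction p with
      | nil => intro l _; rfl
      | cons h _ ih => intro l hl; rw [(hcoord _ _ h).2 l hl]; exact ih l hl
    have claim : ∀ w l, l ≠ i0 → f v0 l = f w l := by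
      intro w l hl
      obtain ⟨p⟩ := (hconn j).preconnected v0 w
      exact claim0 v0 w p l hl
    set g : W j → V i0 := fun w => f w i0 with hg
    have hginj : Function.Injective g := by
      intro a b hab
      apply hinj
      funext l
      by_cases hl : l = i0
      · subst hl; exact hab
      · rw [← claim a l hl, claim b l hl]
    have h3g := (hc i0).2 j g hginj (fun v w h => (hcoord v w h).1)
    set C : ℤ := ∑ l ∈ Finset.univ.erase i0, (s l : ℤ) * c l (f v0 l) with hCdef
    have hC : ∀ w, cc (f w) = (s i0 : ℤ) * c i0 (g w) + C := by
      intro w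
      simp only [hcc, hg, hCdef]
      rw [← Finset.add_sum_erase _ _ (Finset.mem_univ i0)]
      congr 1
      refine Finset.sum_congr rfl (fun l hl => ?_)
      rw [← claim w l (Finset.ne_of_mem_erase hl)]
    have hinjφ : Function.Injective (fun x : ℤ => (s i0 : ℤ) * x + C) := by
      intro a b hab
      simp only at hab
      exact mul_left_cancel₀ (hspos i0) (by linarith)
    have himg : (Set.range fun w => cc (f w)) =
        (fun x : ℤ => (s i0 : ℤ) * x + C) '' (Set.range fun w => c i0 (g w)) := by
      ext x
      constructor
      · rintro ⟨w, rfl⟩; exact ⟨c i0 (g w), ⟨w, rfl⟩, (hC w).symm⟩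
      · rintro ⟨y, ⟨w, rfl⟩, rfl⟩; exact ⟨w, hC w⟩
    rw [himg, Set.ncard_image_of_injective _ hinjφ] at hT2
    omega
  exact ⟨⟨proper, ffree⟩, span, Nat.sInf_le ⟨cc, ⟨proper, ffree⟩, span⟩⟩
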